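/- arXiv:1207.5164 — 2 statements merged into one kernel-verified Lean document; each statement's English description precedes it below -/
import Mathlib

section
/- The function Λ(Θ) := Σ_{i=1}^m ∫_{t_{i−1}}^{t_i} ψ_N( log Σ_{j=1}^{n+1} e^{θ_ij} P(y_{j−1} − u < V_1 ≤ y_j − u) ) du is finite and differentiable at every Θ ∈ ℝ^{m(n+1)}, with ∂Λ(Θ)/∂θ_ij = ∫_{t_{i−1}}^{t_i} ψ_N′( log Σ_{k=1}^{n+1} e^{θ_ik} P(y_{k−1} − u < V_1 ≤ y_k − u) ) · [ e^{θ_ij} P(y_{j−1} − u < V_1 ≤ y_j − u) / Σ_{k=1}^{n+1} e^{θ_ik} P(y_{k−1} − u < V_1 ≤ y_k − u) ] du, and this partial derivative is bounded in absolute value by (t_i − t_{i−1}) · max{ |ψ_N′(max_k θ_ik)|, |ψ_N′(min_k θ_ik)| }. -/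
open MeasureTheory Filter Set
open scoped ENNReal

noncomputable section

namespace Stmt5

/-- `P(y_{j-1} − u < V ≤ y_j − u)`, where `μ` is the law of `V`. -/
def pr (μ : Measure ℝ) {n : ℕ} (y : Fin (n + 2) → ℝ) (j : Fin (n + 1)) (u : ℝ) : ℝ :=
  (μ (Ioc (y j.castSucc - u) (y j.succ - u))).toReal

/-- `Λ(Θ) = ∑_i ∫_{t_{i-1}}^{t_i} ψ_N( log ∑_j e^{θ_ij} P(y_{j-1}−u < V ≤ y_j−u) ) du`. -/
def Lambda (ψ : ℝ → ℝ) (μ : Measure ℝ) {m n : ℕ}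
    (t : Fin (m + 1) → ℝ) (y : Fin (n + 2) → ℝ)
    (Θ : Fin m × Fin (n + 1) → ℝ) : ℝ :=
  ∑ i : Fin m, ∫ u in Ioc (t i.castSucc) (t i.succ),
    ψ (Real.log (∑ j : Fin (n + 1), Real.exp (Θ (i, j)) * pr μ y j u))

/-- The claimed partial derivative `∂Λ/∂θ_ij`. -/
def LambdaDeriv (ψ : ℝ → ℝ) (μ : Measure ℝ) {m n : ℕ}
    (t : Fin (m + 1) → ℝ) (y : Fin (n + 2) → ℝ)
    (Θ : Fin m × Fin (n + 1) → ℝ) (i : Fin m) (j : Fin (n + 1)) : ℝ :=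
  ∫ u in Ioc (t i.castSucc) (t i.succ),
    deriv ψ (Real.log (∑ k : Fin (n + 1), Real.exp (Θ (i, k)) * pr μ y k u)) *
      (Real.exp (Θ (i, j)) * pr μ y j u /
        ∑ k : Fin (n + 1), Real.exp (Θ (i, k)) * pr μ y k u)

lemma pr_nonneg (μ : Measure ℝ) {n : ℕ} (y : Fin (n + 2) → ℝ) (j : Fin (n + 1)) (u : ℝ) :
    0 ≤ pr μ y j u := ENNReal.toReal_nonneg

lemma cdf_sub (μ : Measure ℝ) [IsProbabilityMeasure μ] {a b : ℝ} (hab : a ≤ b) :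
    (μ (Ioc a b)).toReal = (μ (Iic b)).toReal - (μ (Iic a)).toReal := by
  have h : μ (Iic a) + μ (Ioc a b) = μ (Iic b) := by
    rw [← measure_union (Iic_disjoint_Ioc le_rfl) measurableSet_Ioc, Iic_union_Ioc_eq_Iic hab]
  have h1 : μ (Iic a) ≠ ∞ := measure_ne_top μ _
  have h2 : μ (Ioc a b) ≠ ∞ := measure_ne_top μ _
  rw [← h, ENNReal.toReal_add h1 h2]; ring

lemma pr_eq (μ : Measure ℝ) [IsProbabilityMeasure μ] {n : ℕ} {y : Fin (n + 2) → ℝ}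
    (hymono : StrictMono y) (j : Fin (n + 1)) (u : ℝ) :
    pr μ y j u = (μ (Iic (y j.succ - u))).toReal - (μ (Iic (y j.castSucc - u))).toReal := by
  apply cdf_sub
  have := hymono (Fin.castSucc_lt_succ (i := j))
  linarith

lemma sum_pr_eq_one (μ : Measure ℝ) [IsProbabilityMeasure μ]
    {M T : ℝ} (hsupp : μ (Icc (0 : ℝ) M) = 1)
    {n : ℕ} {y : Fin (n + 2) → ℝ}
    (hy0 : y 0 = 0) (hymono : StrictMono y) (hyl : y (Fin.last (n + 1)) = T + M)
    {u : ℝ} (hu : 0 < u) (huT : u ≤ T) :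
    ∑ j : Fin (n + 1), pr μ y j u = 1 := by
  classical
  set f : ℕ → ℝ := fun k => if h : k ≤ n + 1 then (μ (Iic (y ⟨k, by omega⟩ - u))).toReal else 0
    with hf
  have hstep : ∀ j : Fin (n + 1), pr μ y j u = f (j + 1) - f j := by
    intro j
    have h1 : (j : ℕ) + 1 ≤ n + 1 := j.2
    have h2 : (j : ℕ) ≤ n + 1 := by omega
    rw [pr_eq μ hymono, hf]
    simp only [h1, h2, dif_pos]
    congr 2
  rw [Finset.sum_congr rfl (fun j _ => hstep j), Fin.sum_univ_eq_sum_range (fun k => f (k+1) - f k),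
    Finset.sum_range_sub f]
  have hub : f (n + 1) = 1 := by
    have hlast : y ⟨n + 1, by omega⟩ = T + M := hyl
    have hsub : Icc (0 : ℝ) M ⊆ Iic (T + M - u) := fun x hx => by
      simp only [mem_Iic]; have := hx.2; linarith
    have hge : (1 : ℝ≥0∞) ≤ μ (Iic (T + M - u)) := hsupp ▸ measure_mono hsub
    have hle : μ (Iic (T + M - u)) ≤ 1 := prob_le_one
    have : μ (Iic (T + M - u)) = 1 := le_antisymm hle hge
    simp [hf, hlast, this]
  have hlb : f 0 = 0 := by
    have h0 : y (⟨0, by omega⟩ : Fin (n + 2)) = 0 := hy0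
    have hsub : Iic (-u) ⊆ (Icc (0 : ℝ) M)ᶜ := fun x hx => by
      simp only [mem_Iic] at hx; simp only [mem_compl_iff, mem_Icc, not_and_or, not_le]
      left; linarith
    have hcompl : μ ((Icc (0 : ℝ) M)ᶜ) = 0 := by
      rw [measure_compl measurableSet_Icc (measure_ne_top μ _), hsupp, measure_univ,
        tsub_self]
    have : μ (Iic (-u)) = 0 := le_antisymm (le_of_le_of_eq (measure_mono hsub) hcompl) (zero_le)
    have h00 : (⟨0, by omega⟩ : Fin (n + 2)) = 0 := rfl
    simp [hf, h00, hy0, this]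
  rw [hub, hlb]; ring


lemma sum_exp_bounds {n : ℕ} (c : Fin (n + 1) → ℝ) (p : Fin (n + 1) → ℝ)
    (hp : ∀ j, 0 ≤ p j) (hsum : ∑ j, p j = 1) :
    Real.exp (Finset.univ.inf' Finset.univ_nonempty c) ≤ ∑ j, Real.exp (c j) * p j ∧
      ∑ j, Real.exp (c j) * p j ≤ Real.exp (Finset.univ.sup' Finset.univ_nonempty c) := by
  constructor
  · calc Real.exp (Finset.univ.inf' Finset.univ_nonempty c)
        = ∑ j, Real.exp (Finset.univ.inf' Finset.univ_nonempty c) * p j := by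
          rw [← Finset.mul_sum, hsum, mul_one]
    _ ≤ ∑ j, Real.exp (c j) * p j :=
        Finset.sum_le_sum fun j _ => mul_le_mul_of_nonneg_right
          (Real.exp_le_exp.2 (Finset.inf'_le _ (Finset.mem_univ j))) (hp j)
  · calc ∑ j, Real.exp (c j) * p j
        ≤ ∑ j, Real.exp (Finset.univ.sup' Finset.univ_nonempty c) * p j :=
        Finset.sum_le_sum fun j _ => mul_le_mul_of_nonneg_right
          (Real.exp_le_exp.2 (Finset.le_sup' _ (Finset.mem_univ j))) (hp j)
    _ = Real.exp (Finset.univ.sup' Finset.univ_nonempty c) := by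
          rw [← Finset.mul_sum, hsum, mul_one]

lemma sum_exp_pos {n : ℕ} (c : Fin (n + 1) → ℝ) (p : Fin (n + 1) → ℝ)
    (hp : ∀ j, 0 ≤ p j) (hsum : ∑ j, p j = 1) :
    0 < ∑ j, Real.exp (c j) * p j :=
  lt_of_lt_of_le (Real.exp_pos _) (sum_exp_bounds c p hp hsum).1

lemma log_sum_mem {n : ℕ} (c : Fin (n + 1) → ℝ) (p : Fin (n + 1) → ℝ)
    (hp : ∀ j, 0 ≤ p j) (hsum : ∑ j, p j = 1) :
    Real.log (∑ j, Real.exp (c j) * p j) ∈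
      Icc (Finset.univ.inf' Finset.univ_nonempty c) (Finset.univ.sup' Finset.univ_nonempty c) := by
  obtain ⟨h1, h2⟩ := sum_exp_bounds c p hp hsum
  constructor
  · rw [← Real.log_exp (Finset.univ.inf' Finset.univ_nonempty c)]
    exact Real.log_le_log (Real.exp_pos _) h1
  · rw [← Real.log_exp (Finset.univ.sup' Finset.univ_nonempty c)]
    exact Real.log_le_log (sum_exp_pos c p hp hsum) h2


/-- The integrand of the fderiv. -/
def Phi (ψ : ℝ → ℝ) (μ : Measure ℝ) {m n : ℕ} (y : Fin (n + 2) → ℝ)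
    (Θ : Fin m × Fin (n + 1) → ℝ) (i : Fin m) (u : ℝ) :
    (Fin m × Fin (n + 1) → ℝ) →L[ℝ] ℝ :=
  ∑ j : Fin (n + 1),
    (deriv ψ (Real.log (∑ k : Fin (n + 1), Real.exp (Θ (i, k)) * pr μ y k u)) *
      (Real.exp (Θ (i, j)) * pr μ y j u /
        ∑ k : Fin (n + 1), Real.exp (Θ (i, k)) * pr μ y k u)) •
      ContinuousLinearMap.proj (R := ℝ) (φ := fun _ : Fin m × Fin (n + 1) => ℝ) (i, j)

lemma Phi_apply (ψ : ℝ → ℝ) (μ : Measure ℝ) {m n : ℕ} (y : Fin (n + 2) → ℝ)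
    (Θ : Fin m × Fin (n + 1) → ℝ) (i : Fin m) (u : ℝ) (v : Fin m × Fin (n + 1) → ℝ) :
    Phi ψ μ y Θ i u v =
      ∑ j : Fin (n + 1),
        (deriv ψ (Real.log (∑ k : Fin (n + 1), Real.exp (Θ (i, k)) * pr μ y k u)) *
          (Real.exp (Θ (i, j)) * pr μ y j u /
            ∑ k : Fin (n + 1), Real.exp (Θ (i, k)) * pr μ y k u)) * v (i, j) := by
  simp [Phi, ContinuousLinearMap.sum_apply, smul_eq_mul]

section Key

variable (ψ : ℝ → ℝ) (μ : Measure ℝ) [IsProbabilityMeasure μ]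
  {M T : ℝ} {m n : ℕ} {y : Fin (n + 2) → ℝ}

lemma pr_continuous [IsProbabilityMeasure μ]
    (hcdf : Continuous fun x : ℝ => (μ (Iic x)).toReal)
    (hymono : StrictMono y) (j : Fin (n + 1)) :
    Continuous (fun u => pr μ y j u) := by
  have : (fun u => pr μ y j u) =
      fun u => (μ (Iic (y j.succ - u))).toReal - (μ (Iic (y j.castSucc - u))).toReal := by
    funext u; exact pr_eq μ hymono j u
  rw [this]
  exact (hcdf.comp (continuous_const.sub continuous_id)).sub
    (hcdf.comp (continuous_const.sub continuous_id))

lemma key (hψC1 : ContDiff ℝ 1 ψ)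
    (hsupp : μ (Icc (0 : ℝ) M) = 1)
    (hcdf : Continuous fun x : ℝ => (μ (Iic x)).toReal)
    (hy0 : y 0 = 0) (hymono : StrictMono y) (hyl : y (Fin.last (n + 1)) = T + M)
    {a b : ℝ} (ha : 0 ≤ a) (hb : b ≤ T)
    (Θ : Fin m × Fin (n + 1) → ℝ) (i : Fin m) :
    HasFDerivAt
      (fun Θ' : Fin m × Fin (n + 1) → ℝ => ∫ u in Ioc a b,
        ψ (Real.log (∑ j : Fin (n + 1), Real.exp (Θ' (i, j)) * pr μ y j u)))
      (∫ u in Ioc a b, Phi ψ μ y Θ i u) Θ ∧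
    Integrable (Phi ψ μ y Θ i) (volume.restrict (Ioc a b)) := by
  classical
  set ν := volume.restrict (Ioc a b) with hν
  have hfin : IsFiniteMeasure ν := by
    constructor
    rw [hν, Measure.restrict_apply_univ, Real.volume_Ioc]
    exact ENNReal.ofReal_lt_top
  -- sum of pr = 1 on Ioc a b
  have hsum1 : ∀ u ∈ Ioc a b, ∑ j : Fin (n + 1), pr μ y j u = 1 := fun u hu =>
    sum_pr_eq_one μ hsupp hy0 hymono hyl (lt_of_le_of_lt ha hu.1) (hu.2.trans hb)
  set S : (Fin m × Fin (n + 1) → ℝ) → ℝ → ℝ :=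
    fun Θ' u => ∑ j : Fin (n + 1), Real.exp (Θ' (i, j)) * pr μ y j u with hS
  have hSpos : ∀ (Θ' : Fin m × Fin (n + 1) → ℝ), ∀ u ∈ Ioc a b, 0 < S Θ' u := fun Θ' u hu =>
    sum_exp_pos _ _ (fun j => pr_nonneg μ y j u) (hsum1 u hu)
  have hScont : ∀ Θ', Continuous (S Θ') := fun Θ' =>
    continuous_finset_sum _ fun j _ => continuous_const.mul (pr_continuous μ hcdf hymono j)
  have hlogmem : ∀ (Θ' : Fin m × Fin (n + 1) → ℝ), ∀ u ∈ Ioc a b,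
      Real.log (S Θ' u) ∈ Icc (Finset.univ.inf' Finset.univ_nonempty fun k => Θ' (i, k))
        (Finset.univ.sup' Finset.univ_nonempty fun k => Θ' (i, k)) := fun Θ' u hu =>
    log_sum_mem _ _ (fun j => pr_nonneg μ y j u) (hsum1 u hu)
  -- pointwise differentiability (for every Θ'')
  have hdiff : ∀ u ∈ Ioc a b, ∀ (x : Fin m × Fin (n + 1) → ℝ),
      HasFDerivAt (fun Θ' => ψ (Real.log (S Θ' u))) (Phi ψ μ y x i u) x := by
    intro u hu x
    have hSd : HasFDerivAt (fun Θ' => S Θ' u)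
        (∑ j : Fin (n + 1), (Real.exp (x (i, j)) * pr μ y j u) •
          ContinuousLinearMap.proj (R := ℝ) (φ := fun _ : Fin m × Fin (n + 1) => ℝ) (i, j)) x := by
      apply HasFDerivAt.fun_sum
      intro j _
      have h1 : HasDerivAt (fun s : ℝ => Real.exp s * pr μ y j u)
          (Real.exp (x (i, j)) * pr μ y j u) (x (i, j)) := (Real.hasDerivAt_exp _).mul_const _
      exact h1.comp_hasFDerivAt x
        (ContinuousLinearMap.proj (R := ℝ) (φ := fun _ : Fin m × Fin (n + 1) => ℝ) (i, j)).hasFDerivAt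
    have hlog : HasDerivAt Real.log (S x u)⁻¹ (S x u) := Real.hasDerivAt_log (hSpos x u hu).ne'
    have hpsi : HasDerivAt ψ (deriv ψ (Real.log (S x u))) (Real.log (S x u)) :=
      ((hψC1.differentiable one_ne_zero) _).hasDerivAt
    have hcomp := (hpsi.comp _ hlog).comp_hasFDerivAt x hSd
    refine hcomp.congr_fderiv (Eq.symm ?_)
    rw [Phi, Finset.smul_sum]
    refine Finset.sum_congr rfl fun j _ => ?_
    rw [smul_smul]
    congr 1
    have hSne : S x u ≠ 0 := (hSpos x u hu).ne'
    change deriv ψ (Real.log (S x u)) * (Real.exp (x (i, j)) * pr μ y j u / S x u) = _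
    field_simp
  -- operator norm bound on ball Θ 1
  set lo : ℝ := (Finset.univ.inf' Finset.univ_nonempty fun k => Θ (i, k)) - 1 with hlo
  set hi : ℝ := (Finset.univ.sup' Finset.univ_nonempty fun k => Θ (i, k)) + 1 with hhi
  obtain ⟨C, hC⟩ := (isCompact_Icc (a := lo) (b := hi)).exists_bound_of_continuousOn
    ((hψC1.continuous_deriv le_rfl).continuousOn)
  have hmemIcc : ∀ x ∈ Metric.ball Θ 1, ∀ u ∈ Ioc a b, Real.log (S x u) ∈ Icc lo hi := by
    intro x hx u hu
    have hcoord : ∀ p : Fin m × Fin (n + 1), |x p - Θ p| < 1 := by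
      intro p
      have := dist_le_pi_dist x Θ p
      rw [Real.dist_eq] at this
      exact lt_of_le_of_lt this (Metric.mem_ball.1 hx)
    have h1 := hlogmem x u hu
    constructor
    · have hlow : lo ≤ Finset.univ.inf' Finset.univ_nonempty fun k => x (i, k) := by
        apply Finset.le_inf'
        intro k _
        have hck := hcoord (i, k)
        have h2 : (Finset.univ.inf' Finset.univ_nonempty fun k => Θ (i, k)) ≤ Θ (i, k) :=
          Finset.inf'_le _ (Finset.mem_univ k)
        rw [abs_lt] at hck
        rw [hlo]; linarith
      exact le_trans hlow h1.1
    · have hhigh : (Finset.univ.sup' Finset.univ_nonempty fun k => x (i, k)) ≤ hi := by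
        apply Finset.sup'_le
        intro k _
        have hck := hcoord (i, k)
        have h2 : Θ (i, k) ≤ Finset.univ.sup' Finset.univ_nonempty fun k => Θ (i, k) :=
          Finset.le_sup' (fun k => Θ (i, k)) (Finset.mem_univ k)
        rw [abs_lt] at hck
        rw [hhi]; linarith
      exact le_trans h1.2 hhigh
  have hopnorm : ∀ x ∈ Metric.ball Θ 1, ∀ u ∈ Ioc a b, ‖Phi ψ μ y x i u‖ ≤ C := by
    intro x hx u hu
    refine ContinuousLinearMap.opNorm_le_bound _ ?_ fun v => ?_
    · exact le_trans (norm_nonneg _) (hC _ (hmemIcc x hx u hu))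
    rw [Phi_apply]
    have hd : |deriv ψ (Real.log (S x u))| ≤ C := hC _ (hmemIcc x hx u hu)
    have hwsum : ∑ j : Fin (n + 1), Real.exp (x (i, j)) * pr μ y j u / S x u = 1 := by
      rw [← Finset.sum_div, div_self (hSpos x u hu).ne']
    calc |∑ j : Fin (n + 1), deriv ψ (Real.log (S x u)) *
            (Real.exp (x (i, j)) * pr μ y j u / S x u) * v (i, j)|
        ≤ ∑ j : Fin (n + 1), |deriv ψ (Real.log (S x u)) *
            (Real.exp (x (i, j)) * pr μ y j u / S x u) * v (i, j)| :=
          Finset.abs_sum_le_sum_abs _ _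
      _ ≤ ∑ j : Fin (n + 1), C * (Real.exp (x (i, j)) * pr μ y j u / S x u) * ‖v‖ := by
          refine Finset.sum_le_sum fun j _ => ?_
          rw [abs_mul, abs_mul]
          have hw0 : 0 ≤ Real.exp (x (i, j)) * pr μ y j u / S x u :=
            div_nonneg (mul_nonneg (Real.exp_pos _).le (pr_nonneg μ y j u)) (hSpos x u hu).le
          have h3 : |v (i, j)| ≤ ‖v‖ := by
            have := norm_le_pi_norm v (i, j)
            simpa using this
          have hC0 : 0 ≤ C := le_trans (abs_nonneg _) hd
          rw [abs_of_nonneg hw0]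
          exact mul_le_mul (mul_le_mul_of_nonneg_right hd hw0) h3 (abs_nonneg _)
            (mul_nonneg hC0 hw0)
      _ = C * ‖v‖ := by
          rw [← Finset.sum_mul, ← Finset.mul_sum, hwsum, mul_one]
  -- measurability of the integrand in u, for every x
  have hFmeas : ∀ x : Fin m × Fin (n + 1) → ℝ,
      AEStronglyMeasurable (fun u => ψ (Real.log (S x u))) ν := fun x =>
    ((hψC1.continuous.measurable).comp
      (Real.measurable_log.comp (hScont x).measurable)).aestronglyMeasurable
  -- integrability of F Θ
  obtain ⟨C₂, hC₂⟩ := (isCompact_Icc (a := lo) (b := hi)).exists_bound_of_continuousOn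
    hψC1.continuous.continuousOn
  have hFint : Integrable (fun u => ψ (Real.log (S Θ u))) ν := by
    refine Integrable.mono' (integrable_const C₂) (hFmeas Θ) ?_
    filter_upwards [ae_restrict_mem measurableSet_Ioc] with u hu
    exact hC₂ _ (hmemIcc Θ (Metric.mem_ball_self one_pos) u hu)
  -- measurability of Phi Θ
  have hPhimeas : AEStronglyMeasurable (Phi ψ μ y Θ i) ν := by
    have hrfl : Phi ψ μ y Θ i = fun u => ∑ j : Fin (n + 1),
        (deriv ψ (Real.log (S Θ u)) * (Real.exp (Θ (i, j)) * pr μ y j u / S Θ u)) •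
        ContinuousLinearMap.proj (R := ℝ) (φ := fun _ : Fin m × Fin (n + 1) => ℝ) (i, j) := rfl
    rw [hrfl]
    apply Finset.aestronglyMeasurable_fun_sum
    intro j _
    have hcm : Measurable (fun u => deriv ψ (Real.log (S Θ u)) *
        (Real.exp (Θ (i, j)) * pr μ y j u / S Θ u)) :=
      (((hψC1.continuous_deriv le_rfl).measurable).comp
        (Real.measurable_log.comp (hScont Θ).measurable)).mul
        (((continuous_const.mul (pr_continuous μ hcdf hymono j)).measurable).div
          (hScont Θ).measurable)
    exact hcm.aestronglyMeasurable.smul_const _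
  -- integrability of Phi Θ
  have hPhiint : Integrable (Phi ψ μ y Θ i) ν := by
    refine Integrable.mono' (integrable_const C) hPhimeas ?_
    filter_upwards [ae_restrict_mem measurableSet_Ioc] with u hu
    exact hopnorm Θ (Metric.mem_ball_self one_pos) u hu
  refine ⟨?_, hPhiint⟩
  have := hasFDerivAt_integral_of_dominated_of_fderiv_le (𝕜 := ℝ) (μ := ν)
    (F := fun x u => ψ (Real.log (S x u))) (F' := fun x u => Phi ψ μ y x i u)
    (x₀ := Θ) (bound := fun _ => C) (Metric.ball_mem_nhds Θ one_pos)
    (Eventually.of_forall hFmeas) hFint hPhimeas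
    ?_ (integrable_const C) ?_
  · exact this
  · filter_upwards [ae_restrict_mem measurableSet_Ioc] with u hu x hx
    exact hopnorm x hx u hu
  · filter_upwards [ae_restrict_mem measurableSet_Ioc] with u hu x hx
    exact hdiff u hu x

end Key

/-- `Λ` is (finite and) differentiable at every `Θ`, with partial derivatives
given by `LambdaDeriv`, each bounded by `(t_i − t_{i-1}) · max(|ψ'(max_k θ_ik)|, |ψ'(min_k θ_ik)|)`. -/
theorem lambda_differentiable
    (ψ : ℝ → ℝ) (hψC1 : ContDiff ℝ 1 ψ) (hψconv : StrictConvexOn ℝ univ ψ)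
    (μ : Measure ℝ) [IsProbabilityMeasure μ]
    (M : ℝ) (hM : 0 < M) (hsupp : μ (Icc (0 : ℝ) M) = 1)
    (hcdf : Continuous fun x : ℝ => (μ (Iic x)).toReal)
    (T : ℝ) (hT : 0 < T)
    (m n : ℕ) (t : Fin (m + 1) → ℝ) (y : Fin (n + 2) → ℝ)
    (ht0 : t 0 = 0) (htmono : StrictMono t) (htT : t (Fin.last m) ≤ T)
    (hy0 : y 0 = 0) (hymono : StrictMono y) (hyl : y (Fin.last (n + 1)) = T + M)
    (Θ : Fin m × Fin (n + 1) → ℝ) :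
    DifferentiableAt ℝ (Lambda ψ μ t y) Θ ∧
    (∀ (i : Fin m) (j : Fin (n + 1)),
      HasDerivAt (fun s : ℝ => Lambda ψ μ t y (Function.update Θ (i, j) s))
        (LambdaDeriv ψ μ t y Θ i j) (Θ (i, j)) ∧
      |LambdaDeriv ψ μ t y Θ i j| ≤
        (t i.succ - t i.castSucc) *
          max |deriv ψ (Finset.univ.sup' Finset.univ_nonempty fun k : Fin (n + 1) => Θ (i, k))|
            |deriv ψ (Finset.univ.inf' Finset.univ_nonempty fun k : Fin (n + 1) => Θ (i, k))|) := by
  classical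
  have hta : ∀ i : Fin m, (0 : ℝ) ≤ t i.castSucc := fun i => by
    rw [← ht0]; exact htmono.monotone (Fin.zero_le _)
  have htb : ∀ i : Fin m, t i.succ ≤ T := fun i =>
    le_trans (htmono.monotone (Fin.le_last _)) htT
  have hkey := fun i : Fin m =>
    key ψ μ hψC1 hsupp hcdf hy0 hymono hyl (hta i) (htb i) Θ i
  set L : (Fin m × Fin (n + 1) → ℝ) →L[ℝ] ℝ :=
    ∑ i : Fin m, ∫ u in Ioc (t i.castSucc) (t i.succ), Phi ψ μ y Θ i u with hL
  have hLam : HasFDerivAt (Lambda ψ μ t y) L Θ := by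
    have hrfl : Lambda ψ μ t y = fun Θ' => ∑ i : Fin m,
        ∫ u in Ioc (t i.castSucc) (t i.succ),
          ψ (Real.log (∑ j : Fin (n + 1), Real.exp (Θ' (i, j)) * pr μ y j u)) := rfl
    rw [hrfl, hL]
    exact HasFDerivAt.fun_sum fun i _ => (hkey i).1
  refine ⟨hLam.differentiableAt, fun i j => ?_⟩
  -- basic facts on the interval for i
  have hsum1 : ∀ u ∈ Ioc (t i.castSucc) (t i.succ), ∑ k : Fin (n + 1), pr μ y k u = 1 :=
    fun u hu => sum_pr_eq_one μ hsupp hy0 hymono hyl (lt_of_le_of_lt (hta i) hu.1)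
      (hu.2.trans (htb i))
  have hSpos : ∀ u ∈ Ioc (t i.castSucc) (t i.succ),
      0 < ∑ k : Fin (n + 1), Real.exp (Θ (i, k)) * pr μ y k u := fun u hu =>
    sum_exp_pos _ _ (fun k => pr_nonneg μ y k u) (hsum1 u hu)
  -- the value of L on the basis vector
  have hLsingle : L (Pi.single (i, j) 1) = LambdaDeriv ψ μ t y Θ i j := by
    rw [hL, ContinuousLinearMap.sum_apply]
    have hterm : ∀ i' : Fin m,
        (∫ u in Ioc (t i'.castSucc) (t i'.succ), Phi ψ μ y Θ i' u) (Pi.single (i, j) 1)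
          = if i' = i then LambdaDeriv ψ μ t y Θ i j else 0 := by
      intro i'
      rw [ContinuousLinearMap.integral_apply (hkey i').2 (Pi.single (i, j) 1)]
      by_cases hii : i' = i
      · subst hii
        rw [if_pos rfl, LambdaDeriv]
        congr 1
        funext u
        rw [Phi_apply]
        rw [Finset.sum_eq_single j]
        · simp [Pi.single_apply]
        · intro k _ hk
          have : ((i', k) : Fin m × Fin (n + 1)) ≠ (i', j) := by
            simp [Prod.ext_iff, hk]
          simp [Pi.single_apply, this]
        · intro h; exact absurd (Finset.mem_univ j) h
      · rw [if_neg hii]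
        have : ∀ u : ℝ, Phi ψ μ y Θ i' u (Pi.single (i, j) 1) = 0 := by
          intro u
          rw [Phi_apply]
          apply Finset.sum_eq_zero
          intro k _
          have : ((i', k) : Fin m × Fin (n + 1)) ≠ (i, j) := by
            simp [Prod.ext_iff, hii]
          simp [Pi.single_apply, this]
        simp only [this, integral_zero]
    rw [Finset.sum_congr rfl fun i' _ => hterm i', Finset.sum_ite_eq' Finset.univ i
      (fun _ => LambdaDeriv ψ μ t y Θ i j)]
    simp
  constructor
  · -- HasDerivAt along the coordinate
    set e : Fin m × Fin (n + 1) → ℝ := Pi.single (i, j) 1 with he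
    have hgx : Θ + ((Θ (i, j)) - Θ (i, j)) • e = Θ := by simp
    have hφ : HasDerivAt (fun s : ℝ => Θ + (s - Θ (i, j)) • e) e (Θ (i, j)) := by
      have h1 : HasDerivAt (fun s : ℝ => s - Θ (i, j)) 1 (Θ (i, j)) :=
        (hasDerivAt_id _).sub_const _
      have h2 := (h1.smul_const e).const_add Θ
      simpa using h2
    have hLam' : HasFDerivAt (Lambda ψ μ t y) L
        (Θ + ((Θ (i, j)) - Θ (i, j)) • e) := by rw [hgx]; exact hLam
    have hD := hLam'.comp_hasDerivAt _ hφ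
    have hfun : (fun s : ℝ => Lambda ψ μ t y (Θ + (s - Θ (i, j)) • e))
        = fun s : ℝ => Lambda ψ μ t y (Function.update Θ (i, j) s) := by
      funext s
      congr 1
      funext p
      by_cases hp : p = (i, j)
      · subst hp; simp [he, Pi.single_apply]
      · simp [he, Function.update_of_ne hp, Pi.single_apply, hp]
    have hD' : HasDerivAt (fun s : ℝ => Lambda ψ μ t y (Θ + (s - Θ (i, j)) • e)) (L e)
        (Θ (i, j)) := hD
    rw [hfun] at hD'
    rwa [hLsingle] at hD'
  · -- the bound
    set B : ℝ := max
      |deriv ψ (Finset.univ.sup' Finset.univ_nonempty fun k : Fin (n + 1) => Θ (i, k))|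
      |deriv ψ (Finset.univ.inf' Finset.univ_nonempty fun k : Fin (n + 1) => Θ (i, k))| with hB
    have hmono : MonotoneOn (deriv ψ) univ :=
      hψconv.convexOn.monotoneOn_deriv fun x _ => (hψC1.differentiable one_ne_zero).differentiableAt
    have hbd : ∀ᵐ u ∂(volume.restrict (Ioc (t i.castSucc) (t i.succ))),
        ‖deriv ψ (Real.log (∑ k : Fin (n + 1), Real.exp (Θ (i, k)) * pr μ y k u)) *
          (Real.exp (Θ (i, j)) * pr μ y j u /
            ∑ k : Fin (n + 1), Real.exp (Θ (i, k)) * pr μ y k u)‖ ≤ B := by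
      filter_upwards [ae_restrict_mem measurableSet_Ioc] with u hu
      have hlog := log_sum_mem (fun k => Θ (i, k)) (fun k => pr μ y k u)
        (fun k => pr_nonneg μ y k u) (hsum1 u hu)
      have hd : |deriv ψ (Real.log (∑ k : Fin (n + 1), Real.exp (Θ (i, k)) * pr μ y k u))| ≤ B := by
        rw [hB, max_comm]
        exact abs_le_max_abs_abs
          (hmono (mem_univ _) (mem_univ _) hlog.1) (hmono (mem_univ _) (mem_univ _) hlog.2)
      have hw0 : 0 ≤ Real.exp (Θ (i, j)) * pr μ y j u /
          ∑ k : Fin (n + 1), Real.exp (Θ (i, k)) * pr μ y k u :=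
        div_nonneg (mul_nonneg (Real.exp_pos _).le (pr_nonneg μ y j u)) (hSpos u hu).le
      have hw1 : Real.exp (Θ (i, j)) * pr μ y j u /
          (∑ k : Fin (n + 1), Real.exp (Θ (i, k)) * pr μ y k u) ≤ 1 := by
        rw [div_le_one (hSpos u hu)]
        exact Finset.single_le_sum (f := fun k => Real.exp (Θ (i, k)) * pr μ y k u)
          (fun k _ => mul_nonneg (Real.exp_pos _).le (pr_nonneg μ y k u)) (Finset.mem_univ j)
      rw [Real.norm_eq_abs, abs_mul, abs_of_nonneg hw0]
      calc |deriv ψ (Real.log (∑ k : Fin (n + 1), Real.exp (Θ (i, k)) * pr μ y k u))| *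
            (Real.exp (Θ (i, j)) * pr μ y j u /
              ∑ k : Fin (n + 1), Real.exp (Θ (i, k)) * pr μ y k u)
          ≤ B * 1 := mul_le_mul hd hw1 hw0 (le_trans (abs_nonneg _) hd)
        _ = B := mul_one B
    have hIF : IsFiniteMeasure (volume.restrict (Ioc (t i.castSucc) (t i.succ))) := by
      constructor
      rw [Measure.restrict_apply_univ, Real.volume_Ioc]
      exact ENNReal.ofReal_lt_top
    have := norm_integral_le_of_norm_le_const (μ := volume.restrict (Ioc (t i.castSucc) (t i.succ)))
      hbd
    rw [LambdaDeriv, ← Real.norm_eq_abs]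
    refine le_trans this ?_
    rw [measureReal_restrict_apply_univ, Real.volume_real_Ioc,
      max_eq_left (sub_nonneg.2 (htmono (Fin.castSucc_lt_succ (i := i))).le)]
    rw [mul_comm]


end Stmt5
end
end

section
/- Let Ū := Σ_{i=1}^G U_i, where (U_n) are i.i.d. with cumulant generating function κ(θ) = log E[exp(θ U_1)] and G is an independent geometric random variable with P(G = n) = F̄(K)^{n−1} F(K) for n ≥ 1 (with F(K) ∈ (0,1]). Then the cumulant generating function of Ū is κ^{(K)}(θ) = κ(θ) + log( F(K) / (1 − F̄(K) e^{κ(θ)}) ) for all θ with F̄(K) e^{κ(θ)} < 1, and consequently the associated infinitesimal logarithmic moment generating function ψ_N^{(K)}(θ) := −(κ^{(K)})^{−1}(−θ) satisfies ψ_N^{(K)}(θ) = ψ_N( log( F(K) e^{θ} + F̄(K) ) ), where ψ_N(θ) := −κ^{−1}(−θ). -/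
open MeasureTheory Filter Set
open scoped ENNReal

noncomputable section

namespace Stmt9

variable {Ω : Type*} [MeasurableSpace Ω]

/-- `Ū = U 0 + ⋯ + U (G-1)`, the geometric compound of the interarrival times. -/
def Ubar (U : ℕ → Ω → ℝ) (G : Ω → ℕ) (ω : Ω) : ℝ := ∑ i ∈ Finset.range (G ω), U i ω

open ProbabilityTheory

set_option linter.unusedSectionVars false
set_option maxHeartbeats 1000000

section Aux

variable (P : Measure Ω) [IsProbabilityMeasure P] (U : ℕ → Ω → ℝ) (G : Ω → ℕ)

lemma fmeas (hUmeas : ∀ n, Measurable (U n)) (hGmeas : Measurable G) :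
    ∀ o : Option ℕ, Measurable (Option.elim o (fun ω => (G ω : ℝ)) U) := by
  rintro (_ | n)
  · exact measurable_from_top.comp hGmeas
  · exact hUmeas n

lemma Ubar_meas (hUmeas : ∀ n, Measurable (U n)) (hGmeas : Measurable G) :
    Measurable (Ubar U G) := by
  have h : Measurable fun q : Ω × ℕ => ∑ i ∈ Finset.range q.2, U i q.1 :=
    measurable_from_prod_countable_left fun n => by
      simpa using Finset.measurable_sum (Finset.range n) fun i _ => hUmeas i
  exact h.comp (measurable_id.prodMk hGmeas)

lemma indep_sum_G
    (hUmeas : ∀ n, Measurable (U n)) (hGmeas : Measurable G)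
    (hIndep : ProbabilityTheory.iIndepFun
      (fun o : Option ℕ => Option.elim o (fun ω => (G ω : ℝ)) U) P) (n : ℕ) :
    IndepFun (fun ω => ∑ i ∈ Finset.range n, U i ω) (fun ω => (G ω : ℝ)) P := by
  classical
  have h := hIndep.indepFun_finsetSum_of_notMem (fmeas U G hUmeas hGmeas)
    (s := (Finset.range n).map ⟨some, Option.some_injective ℕ⟩) (i := none) (by simp)
  have heq : (∑ j ∈ (Finset.range n).map ⟨some, Option.some_injective ℕ⟩,
      (fun o : Option ℕ => Option.elim o (fun ω => (G ω : ℝ)) U) j)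
      = fun ω => ∑ i ∈ Finset.range n, U i ω := by
    funext ω
    simp [Finset.sum_apply, Finset.sum_map]
  rwa [heq] at h

lemma indep_sum_U
    (hUmeas : ∀ n, Measurable (U n)) (hGmeas : Measurable G)
    (hIndep : ProbabilityTheory.iIndepFun
      (fun o : Option ℕ => Option.elim o (fun ω => (G ω : ℝ)) U) P) (n : ℕ) :
    IndepFun (fun ω => ∑ i ∈ Finset.range n, U i ω) (U n) P := by
  classical
  have h := hIndep.indepFun_finsetSum_of_notMem (fmeas U G hUmeas hGmeas)
    (s := (Finset.range n).map ⟨some, Option.some_injective ℕ⟩) (i := some n) (by simp)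
  have heq : (∑ j ∈ (Finset.range n).map ⟨some, Option.some_injective ℕ⟩,
      (fun o : Option ℕ => Option.elim o (fun ω => (G ω : ℝ)) U) j)
      = fun ω => ∑ i ∈ Finset.range n, U i ω := by
    funext ω
    simp [Finset.sum_apply, Finset.sum_map]
  rwa [heq] at h

lemma lint_exp_sum
    (hUmeas : ∀ n, Measurable (U n)) (hGmeas : Measurable G)
    (hIndep : ProbabilityTheory.iIndepFun
      (fun o : Option ℕ => Option.elim o (fun ω => (G ω : ℝ)) U) P)
    (hUid : ∀ n, Measure.map (U n) P = Measure.map (U 0) P) (θ : ℝ) (n : ℕ) :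
    ∫⁻ ω, ENNReal.ofReal (Real.exp (θ * ∑ i ∈ Finset.range n, U i ω)) ∂P
      = (∫⁻ ω, ENNReal.ofReal (Real.exp (θ * U 0 ω)) ∂P) ^ n := by
  induction n with
  | zero => simp
  | succ n ih =>
    have hφ : Measurable fun x : ℝ => ENNReal.ofReal (Real.exp (θ * x)) :=
      ENNReal.measurable_ofReal.comp (Real.measurable_exp.comp (measurable_const_mul θ))
    have hUn : ∫⁻ ω, ENNReal.ofReal (Real.exp (θ * U n ω)) ∂P
        = ∫⁻ ω, ENNReal.ofReal (Real.exp (θ * U 0 ω)) ∂P := by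
      rw [← lintegral_map hφ (hUmeas n), ← lintegral_map hφ (hUmeas 0), hUid n]
    have hind : IndepFun
        (fun ω => ENNReal.ofReal (Real.exp (θ * ∑ i ∈ Finset.range n, U i ω)))
        (fun ω => ENNReal.ofReal (Real.exp (θ * U n ω))) P := by
      exact (indep_sum_U P U G hUmeas hGmeas hIndep n).comp hφ hφ
    have hm1 : AEMeasurable
        (fun ω => ENNReal.ofReal (Real.exp (θ * ∑ i ∈ Finset.range n, U i ω))) P := by
      exact (hφ.comp (Finset.measurable_sum (Finset.range n) fun i _ => hUmeas i)).aemeasurable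
    have hm2 : AEMeasurable (fun ω => ENNReal.ofReal (Real.exp (θ * U n ω))) P := by
      exact (hφ.comp (hUmeas n)).aemeasurable
    have hmul : ∀ ω, ENNReal.ofReal (Real.exp (θ * ∑ i ∈ Finset.range (n+1), U i ω))
        = ENNReal.ofReal (Real.exp (θ * ∑ i ∈ Finset.range n, U i ω))
          * ENNReal.ofReal (Real.exp (θ * U n ω)) := by
      intro ω
      rw [← ENNReal.ofReal_mul (Real.exp_nonneg _), ← Real.exp_add,
        Finset.sum_range_succ, mul_add]
    simp_rw [hmul]
    rw [lintegral_mul_eq_lintegral_mul_lintegral_of_indepFun'' hm1 hm2 hind, ih, hUn, pow_succ]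

lemma disj (n m : ℕ) (hnm : n ≠ m) : Disjoint (G ⁻¹' {n}) (G ⁻¹' {m}) := by
  apply Set.disjoint_left.2
  intro ω h1 h2
  exact hnm ((Set.mem_preimage.1 h1).symm.trans (Set.mem_preimage.1 h2))

lemma PG0 (p : ℝ) (hp : 0 < p) (hp1 : p ≤ 1)
    (hGmeas : Measurable G)
    (hG : ∀ n : ℕ, 1 ≤ n → P {ω | G ω = n} = ENNReal.ofReal ((1 - p) ^ (n - 1) * p)) :
    P (G ⁻¹' {0}) = 0 := by
  have hq0 : (0:ℝ) ≤ 1 - p := by linarith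
  have hsucc : ∑' n : ℕ, P (G ⁻¹' {n + 1}) = 1 := by
    have h1 : ∀ n : ℕ, P (G ⁻¹' {n + 1})
        = ENNReal.ofReal (1 - p) ^ n * ENNReal.ofReal p := by
      intro n
      have := hG (n + 1) (by omega)
      simp only [Nat.add_sub_cancel] at this
      have hset : (G ⁻¹' {n + 1}) = {ω | G ω = n + 1} := rfl
      rw [hset, this, ENNReal.ofReal_mul (by positivity), ENNReal.ofReal_pow hq0]
    rw [tsum_congr h1, ENNReal.tsum_mul_right, ENNReal.tsum_geometric]
    have h2 : (1 : ℝ≥0∞) - ENNReal.ofReal (1 - p) = ENNReal.ofReal p := by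
      rw [← ENNReal.ofReal_one, ← ENNReal.ofReal_sub _ hq0]
      norm_num
    rw [h2, ENNReal.inv_mul_cancel (by simpa [ENNReal.ofReal_pos] using hp)
      ENNReal.ofReal_ne_top]
  have hcover : (⋃ n : ℕ, G ⁻¹' {n}) = Set.univ := by
    ext ω; simp
  have hsum : ∑' n : ℕ, P (G ⁻¹' {n}) = 1 := by
    rw [← measure_iUnion (fun n m hnm => disj G n m hnm)
      (fun n => hGmeas (measurableSet_singleton n)), hcover, measure_univ]
  rw [tsum_eq_zero_add' ENNReal.summable, hsucc] at hsum
  have h0 : P (G ⁻¹' {0}) + 1 = 0 + 1 := by rw [hsum, zero_add]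
  exact (ENNReal.add_right_inj ENNReal.one_ne_top).1 (by simpa [add_comm] using h0)

lemma lint_Ubar (p : ℝ) (hp : 0 < p) (hp1 : p ≤ 1)
    (hUmeas : ∀ n, Measurable (U n)) (hGmeas : Measurable G)
    (hIndep : ProbabilityTheory.iIndepFun
      (fun o : Option ℕ => Option.elim o (fun ω => (G ω : ℝ)) U) P)
    (hUid : ∀ n, Measure.map (U n) P = Measure.map (U 0) P)
    (hG : ∀ n : ℕ, 1 ≤ n → P {ω | G ω = n} = ENNReal.ofReal ((1 - p) ^ (n - 1) * p))
    (θ : ℝ) :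
    ∫⁻ ω, ENNReal.ofReal (Real.exp (θ * Ubar U G ω)) ∂P
      = ∑' n : ℕ, ENNReal.ofReal ((1 - p) ^ n * p)
          * (∫⁻ ω, ENNReal.ofReal (Real.exp (θ * U 0 ω)) ∂P) ^ (n + 1) := by
  classical
  have hφ : Measurable fun x : ℝ => ENNReal.ofReal (Real.exp (θ * x)) :=
    ENNReal.measurable_ofReal.comp (Real.measurable_exp.comp (measurable_const_mul θ))
  have hAmeas : ∀ n : ℕ, MeasurableSet (G ⁻¹' {n}) :=
    fun n => hGmeas (measurableSet_singleton n)
  have hcover : (⋃ n : ℕ, G ⁻¹' {n}) = Set.univ := by ext ω; simp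
  have step1 : ∫⁻ ω, ENNReal.ofReal (Real.exp (θ * Ubar U G ω)) ∂P
      = ∑' n : ℕ, ∫⁻ ω in G ⁻¹' {n}, ENNReal.ofReal (Real.exp (θ * Ubar U G ω)) ∂P := by
    rw [← lintegral_iUnion hAmeas (fun n m hnm => disj G n m hnm), hcover,
      setLIntegral_univ]
  -- on each piece, replace Ubar with the fixed sum
  have step2 : ∀ n : ℕ, ∫⁻ ω in G ⁻¹' {n}, ENNReal.ofReal (Real.exp (θ * Ubar U G ω)) ∂P
      = P (G ⁻¹' {n}) * (∫⁻ ω, ENNReal.ofReal (Real.exp (θ * U 0 ω)) ∂P) ^ n := by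
    intro n
    have hcongr : ∫⁻ ω in G ⁻¹' {n}, ENNReal.ofReal (Real.exp (θ * Ubar U G ω)) ∂P
        = ∫⁻ ω in G ⁻¹' {n},
            ENNReal.ofReal (Real.exp (θ * ∑ i ∈ Finset.range n, U i ω)) ∂P := by
      apply setLIntegral_congr_fun (hAmeas n)
      intro ω hω
      beta_reduce
      have : G ω = n := hω
      rw [Ubar, this]
    rw [hcongr, ← lintegral_indicator (hAmeas n)]
    -- write the indicator as a product with a function of G
    have hkey : ∀ ω, (G ⁻¹' {n}).indicator
        (fun ω => ENNReal.ofReal (Real.exp (θ * ∑ i ∈ Finset.range n, U i ω))) ω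
        = ENNReal.ofReal (Real.exp (θ * ∑ i ∈ Finset.range n, U i ω))
          * ({(n : ℝ)} : Set ℝ).indicator (fun _ => (1 : ℝ≥0∞)) ((G ω : ℝ)) := by
      intro ω
      by_cases h : G ω = n
      · simp [Set.indicator_apply, h]
      · have h' : ((G ω : ℕ) : ℝ) ≠ ((n : ℕ) : ℝ) := by exact_mod_cast h
        simp [Set.indicator_apply, h, h']
    simp_rw [hkey]
    have hψm : Measurable fun x : ℝ =>
        ({(n : ℝ)} : Set ℝ).indicator (fun _ => (1 : ℝ≥0∞)) x :=
      measurable_const.indicator (measurableSet_singleton _)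
    have hind : IndepFun
        (fun ω => ENNReal.ofReal (Real.exp (θ * ∑ i ∈ Finset.range n, U i ω)))
        (fun ω => ({(n : ℝ)} : Set ℝ).indicator (fun _ => (1 : ℝ≥0∞)) ((G ω : ℝ))) P := by
      exact (indep_sum_G P U G hUmeas hGmeas hIndep n).comp hφ hψm
    have hm1 : AEMeasurable
        (fun ω => ENNReal.ofReal (Real.exp (θ * ∑ i ∈ Finset.range n, U i ω))) P := by
      exact (hφ.comp (Finset.measurable_sum (Finset.range n) fun i _ => hUmeas i)).aemeasurable
    have hm2 : AEMeasurable
        (fun ω => ({(n : ℝ)} : Set ℝ).indicator (fun _ => (1 : ℝ≥0∞)) ((G ω : ℝ))) P := by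
      exact (hψm.comp (measurable_from_top.comp hGmeas)).aemeasurable
    rw [lintegral_mul_eq_lintegral_mul_lintegral_of_indepFun'' hm1 hm2 hind,
      lint_exp_sum P U G hUmeas hGmeas hIndep hUid θ n]
    have hGind : ∫⁻ ω, ({(n : ℝ)} : Set ℝ).indicator (fun _ => (1 : ℝ≥0∞)) ((G ω : ℝ)) ∂P
        = P (G ⁻¹' {n}) := by
      have hset : (fun ω => ({(n : ℝ)} : Set ℝ).indicator (fun _ => (1 : ℝ≥0∞)) ((G ω : ℝ)))
          = (G ⁻¹' {n}).indicator (fun _ => (1 : ℝ≥0∞)) := by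
        funext ω
        by_cases h : G ω = n
        · simp [Set.indicator_apply, h]
        · have h' : ((G ω : ℕ) : ℝ) ≠ ((n : ℕ) : ℝ) := by exact_mod_cast h
          simp [Set.indicator_apply, h, h']
      rw [hset]
      exact lintegral_indicator_one (hAmeas n)
    rw [hGind, mul_comm]
  rw [step1]
  simp_rw [step2]
  rw [tsum_eq_zero_add' ENNReal.summable]
  rw [PG0 P G p hp hp1 hGmeas hG, zero_mul, zero_add]
  apply tsum_congr
  intro n
  rw [show (G ⁻¹' {n + 1}) = {ω | G ω = n + 1} from rfl, hG (n + 1) (by omega)]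
  simp

lemma main (p : ℝ) (hp : 0 < p) (hp1 : p ≤ 1)
    (hUmeas : ∀ n, Measurable (U n)) (hGmeas : Measurable G)
    (hIndep : ProbabilityTheory.iIndepFun
      (fun o : Option ℕ => Option.elim o (fun ω => (G ω : ℝ)) U) P)
    (hUid : ∀ n, Measure.map (U n) P = Measure.map (U 0) P)
    (hG : ∀ n : ℕ, 1 ≤ n → P {ω | G ω = n} = ENNReal.ofReal ((1 - p) ^ (n - 1) * p))
    (θ : ℝ)
    (hInt : Integrable (fun ω => Real.exp (θ * U 0 ω)) P)
    (hlt : (1 - p) * mgf (U 0) P θ < 1) :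
    Integrable (fun ω => Real.exp (θ * Ubar U G ω)) P ∧
      mgf (Ubar U G) P θ = p * mgf (U 0) P θ / (1 - (1 - p) * mgf (U 0) P θ) := by
  have hq0 : (0:ℝ) ≤ 1 - p := by linarith
  have hM0 : 0 < mgf (U 0) P θ := mgf_pos hInt
  set M := mgf (U 0) P θ with hM
  have hqM0 : 0 ≤ (1 - p) * M := mul_nonneg hq0 hM0.le
  have hden : 0 < 1 - (1 - p) * M := by linarith
  have hlM : ∫⁻ ω, ENNReal.ofReal (Real.exp (θ * U 0 ω)) ∂P = ENNReal.ofReal M := by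
    rw [← ofReal_integral_eq_lintegral_ofReal hInt
      (ae_of_all _ fun ω => Real.exp_nonneg _)]
    rfl
  have htot : ∫⁻ ω, ENNReal.ofReal (Real.exp (θ * Ubar U G ω)) ∂P
      = ENNReal.ofReal (p * M / (1 - (1 - p) * M)) := by
    rw [lint_Ubar P U G p hp hp1 hUmeas hGmeas hIndep hUid hG θ, hlM]
    have hterm : ∀ n : ℕ, ENNReal.ofReal ((1 - p) ^ n * p) * ENNReal.ofReal M ^ (n + 1)
        = ENNReal.ofReal ((1 - p) * M) ^ n * ENNReal.ofReal (p * M) := by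
      intro n
      rw [← ENNReal.ofReal_pow hM0.le, ← ENNReal.ofReal_mul (by positivity),
        ← ENNReal.ofReal_pow hqM0, ← ENNReal.ofReal_mul (by positivity)]
      congr 1
      rw [mul_pow, pow_succ]
      ring
    rw [tsum_congr hterm, ENNReal.tsum_mul_right, ENNReal.tsum_geometric]
    have h2 : (1 : ℝ≥0∞) - ENNReal.ofReal ((1 - p) * M)
        = ENNReal.ofReal (1 - (1 - p) * M) := by
      rw [← ENNReal.ofReal_one]
      exact (ENNReal.ofReal_sub _ hqM0).symm
    rw [h2, ← ENNReal.ofReal_inv_of_pos hden, ← ENNReal.ofReal_mul (by positivity)]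
    congr 1
    field_simp
  have hIntU : Integrable (fun ω => Real.exp (θ * Ubar U G ω)) P := by
    refine ⟨(Real.measurable_exp.comp
      ((Ubar_meas U G hUmeas hGmeas).const_mul θ)).aestronglyMeasurable, ?_⟩
    rw [hasFiniteIntegral_iff_ofReal (ae_of_all _ fun ω => Real.exp_nonneg _), htot]
    exact ENNReal.ofReal_lt_top
  refine ⟨hIntU, ?_⟩
  have heq := ofReal_integral_eq_lintegral_ofReal hIntU
    (ae_of_all _ fun ω => Real.exp_nonneg _)
  rw [htot] at heq
  have hint_nn : (0:ℝ) ≤ ∫ ω, Real.exp (θ * Ubar U G ω) ∂P :=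
    integral_nonneg fun ω => Real.exp_nonneg _
  have := (ENNReal.ofReal_eq_ofReal_iff hint_nn (by positivity)).1 heq
  simpa [mgf] using this

end Aux


/-- if `Ū = ∑_{i=1}^G U_i` with `G` geometric (`P(G = n) = q^{n-1} p`)
independent of the i.i.d. `(U_n)`, then the cgf of `Ū` is
`κ^{(K)}(θ) = κ(θ) + log(p / (1 − q e^{κ(θ)}))` whenever `q e^{κ(θ)} < 1`, and consequently
the inverse functions satisfy `ψ^{(K)}(θ) = ψ(log(p e^θ + q))`.  Here `p = F(K)` and
`q = F̄(K) = 1 − p`. -/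
theorem cgf_geometric_compound
    (P : Measure Ω) [IsProbabilityMeasure P] (U : ℕ → Ω → ℝ) (G : Ω → ℕ)
    (hUmeas : ∀ n, Measurable (U n)) (hGmeas : Measurable G)
    (hIndep : ProbabilityTheory.iIndepFun
      (fun o : Option ℕ => Option.elim o (fun ω => (G ω : ℝ)) U) P)
    (hUid : ∀ n, Measure.map (U n) P = Measure.map (U 0) P)
    (hUpos : ∀ n, ∀ᵐ ω ∂P, 0 < U n ω)
    (hExp : ∃ θ > 0, Integrable (fun ω => Real.exp (θ * U 0 ω)) P)
    (p : ℝ) (hp : 0 < p) (hp1 : p ≤ 1)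
    (hG : ∀ n : ℕ, 1 ≤ n → P {ω | G ω = n} = ENNReal.ofReal ((1 - p) ^ (n - 1) * p))
    (ψ ψK : ℝ → ℝ)
    (hψ : ∀ θ : ℝ, ProbabilityTheory.cgf (U 0) P (-(ψ θ)) = -θ)
    (hψdom : ∀ θ : ℝ, Integrable (fun ω => Real.exp (-(ψ θ) * U 0 ω)) P)
    (hψK : ∀ θ : ℝ, ProbabilityTheory.cgf (Ubar U G) P (-(ψK θ)) = -θ)
    (hψKdom : ∀ θ : ℝ, Integrable (fun ω => Real.exp (-(ψK θ) * Ubar U G ω)) P)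
    (hκKinj : InjOn (ProbabilityTheory.cgf (Ubar U G) P)
      {s : ℝ | Integrable (fun ω => Real.exp (s * Ubar U G ω)) P}) :
    (∀ θ : ℝ, Integrable (fun ω => Real.exp (θ * U 0 ω)) P →
        (1 - p) * Real.exp (ProbabilityTheory.cgf (U 0) P θ) < 1 →
        ProbabilityTheory.cgf (Ubar U G) P θ =
          ProbabilityTheory.cgf (U 0) P θ +
            Real.log (p / (1 - (1 - p) * Real.exp (ProbabilityTheory.cgf (U 0) P θ)))) ∧
    (∀ θ : ℝ, ψK θ = ψ (Real.log (p * Real.exp θ + (1 - p)))) := by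
  have hq0 : (0:ℝ) ≤ 1 - p := by linarith
  -- the general formula, as a standalone fact
  have key : ∀ θ : ℝ, Integrable (fun ω => Real.exp (θ * U 0 ω)) P →
      (1 - p) * mgf (U 0) P θ < 1 →
      cgf (Ubar U G) P θ = cgf (U 0) P θ +
        Real.log (p / (1 - (1 - p) * mgf (U 0) P θ)) := by
    intro θ hInt hlt
    have hM0 : 0 < mgf (U 0) P θ := mgf_pos hInt
    have hden : 0 < 1 - (1 - p) * mgf (U 0) P θ := by
      have := mul_nonneg hq0 hM0.le
      linarith
    obtain ⟨hIntU, hmgf⟩ := main P U G p hp hp1 hUmeas hGmeas hIndep hUid hG θ hInt hlt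
    simp only [cgf]
    rw [hmgf]
    have hsplit : p * mgf (U 0) P θ / (1 - (1 - p) * mgf (U 0) P θ)
        = mgf (U 0) P θ * (p / (1 - (1 - p) * mgf (U 0) P θ)) := by ring
    rw [hsplit, Real.log_mul (ne_of_gt hM0) (ne_of_gt (by positivity))]
  constructor
  · intro θ hInt hlt
    have hM0 : 0 < mgf (U 0) P θ := mgf_pos hInt
    have hexp : Real.exp (cgf (U 0) P θ) = mgf (U 0) P θ := by
      rw [cgf, Real.exp_log hM0]
    rw [hexp] at hlt ⊢
    exact key θ hInt hlt
  · intro θ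
    have hpos : 0 < p * Real.exp θ + (1 - p) := by
      have := Real.exp_pos θ
      nlinarith
    set θ' := Real.log (p * Real.exp θ + (1 - p)) with hθ'
    have hexpθ' : Real.exp θ' = p * Real.exp θ + (1 - p) := Real.exp_log hpos
    have hint_s : Integrable (fun ω => Real.exp (-(ψ θ') * U 0 ω)) P := hψdom θ'
    have hMs : mgf (U 0) P (-(ψ θ')) = Real.exp (-θ') := by
      have h := hψ θ'
      rw [cgf] at h
      rw [← Real.exp_log (mgf_pos hint_s), h]
    have hlt : (1 - p) * mgf (U 0) P (-(ψ θ')) < 1 := by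
      rw [hMs, Real.exp_neg, hexpθ', ← div_eq_mul_inv, div_lt_one hpos]
      have h1 : 0 < p * Real.exp θ := by positivity
      linarith
    obtain ⟨hIntU, hmgf⟩ :=
      main P U G p hp hp1 hUmeas hGmeas hIndep hUid hG (-(ψ θ')) hint_s hlt
    have hcgfUbar : cgf (Ubar U G) P (-(ψ θ')) = -θ := by
      rw [cgf, hmgf, hMs]
      have hkey : p * Real.exp (-θ') / (1 - (1 - p) * Real.exp (-θ')) = Real.exp (-θ) := by
        rw [Real.exp_neg θ', Real.exp_neg θ, hexpθ']
        have hE := Real.exp_pos θ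
        have hd : 1 - (1 - p) * (p * Real.exp θ + (1 - p))⁻¹ ≠ 0 := by
          have h2 : (1 - p) * (p * Real.exp θ + (1 - p))⁻¹ < 1 := by
            rw [← div_eq_mul_inv, div_lt_one hpos]
            have : 0 < p * Real.exp θ := by positivity
            linarith
          linarith
        field_simp
        ring
      rw [hkey, Real.log_exp]
    have h2 : -(ψK θ) ∈ {s : ℝ | Integrable (fun ω => Real.exp (s * Ubar U G ω)) P} :=
      hψKdom θ
    have h1 : -(ψ θ') ∈ {s : ℝ | Integrable (fun ω => Real.exp (s * Ubar U G ω)) P} :=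
      hIntU
    have heq := hκKinj h2 h1 (by rw [hψK θ, hcgfUbar])
    have := neg_injective heq
    rw [this]


end Stmt9
end
end
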